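/- Let c > 0 and let g⁺ ∈ B_b(X̄₊) be given by g⁺(t,j) := e^{−ct}. Set C_{K,c} := ∫₀¹ (1 − (1 − x)^{K/c})² dx, so that C_{K,c} < 1. Then for every integer n ≥ 1, every ℓ⁺, ℓ⁻ ≥ 0, and every (s,i) ∈ ℝ₊ × E₊, ((J⁻ 𝒫⁻_{ℓ⁻+ℓ⁺} J⁺ 𝒫⁺_{ℓ⁻+ℓ⁺})ⁿ g⁺)(s,i) ≤ C_{K,c}ⁿ · e^{−cs}. -/

import Mathlib

open MeasureTheory Set Filter
open scoped ENNReal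

noncomputable section

/-- The extended state space `Ē = E ∪ {∂}`, with `none` playing the role of the coffin state. -/
instance optionMeasurableSpace {E : Type*} : MeasurableSpace (Option E) := ⊤

/-- The canonical path space: `Ē`-valued functions of time. -/
abbrev CPath (E : Type*) := ℝ → Option E

/-- The state of the path at an extended time, with `X_∞ := ∂`. -/
def Xat {E : Type*} (t : ℝ≥0∞) (ω : CPath E) : Option E :=
  if t = ∞ then none else ω t.toReal

/-- The additive functional `φ_t(s) = ∫_s^t v(X_u) du`. -/
def phi {E : Type*} (v : Option E → ℝ) (s t : ℝ) (ω : CPath E) : ℝ :=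
  ∫ u in s..t, v (ω u)

/-- The first passage time `τ_ℓ⁺(s) = inf {t ∈ [s,∞] : φ_t(s) > ℓ}` (with `inf ∅ = ∞`). -/
def tauP {E : Type*} (v : Option E → ℝ) (s ℓ : ℝ) (ω : CPath E) : ℝ≥0∞ :=
  sInf {t : ℝ≥0∞ | ∃ u : ℝ, s ≤ u ∧ t = ENNReal.ofReal u ∧ ℓ < phi v s u ω}

/-- The first passage time `τ_ℓ⁻(s) = inf {t ∈ [s,∞] : φ_t(s) < -ℓ}` (with `inf ∅ = ∞`). -/
def tauM {E : Type*} (v : Option E → ℝ) (s ℓ : ℝ) (ω : CPath E) : ℝ≥0∞ :=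
  sInf {t : ℝ≥0∞ | ∃ u : ℝ, s ≤ u ∧ t = ENNReal.ofReal u ∧ phi v s u ω < -ℓ}

/-- `ξ⁺_{ℓ⁻,ℓ⁺}(s)`: equals `τ_{ℓ⁺}⁺(s)` if it is strictly smaller than `τ_{ℓ⁻}⁻(s)`, else `∞`. -/
def xiP {E : Type*} (v : Option E → ℝ) (ℓm ℓp s : ℝ) (ω : CPath E) : ℝ≥0∞ :=
  if tauP v s ℓp ω < tauM v s ℓm ω then tauP v s ℓp ω else ∞

/-- `ξ⁻_{ℓ⁻,ℓ⁺}(s)`: equals `τ_{ℓ⁻}⁻(s)` if it is strictly smaller than `τ_{ℓ⁺}⁺(s)`, else `∞`. -/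
def xiM {E : Type*} (v : Option E → ℝ) (ℓm ℓp s : ℝ) (ω : CPath E) : ℝ≥0∞ :=
  if tauM v s ℓm ω < tauP v s ℓp ω then tauM v s ℓm ω else ∞

/-- Membership in `B_b(X̄₊)`: bounded measurable functions on
`X̄₊ = (ℝ₊ × E₊) ∪ {(∞,∂)}` vanishing at `(∞,∂)`, encoded as functions on
`[0,∞] × Ē` vanishing off `ℝ₊ × E₊` (in particular at `(∞,∂)`). -/
def MemBbP {E : Type*} (v : Option E → ℝ) (g : ℝ≥0∞ → Option E → ℝ) : Prop :=
  (∀ j, Measurable fun t => g t j) ∧ (∃ C, ∀ t j, |g t j| ≤ C) ∧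
    (∀ t, g t none = 0) ∧
    (∀ (t : ℝ≥0∞) (e : E), ¬(0 < v (some e) ∧ t ≠ ∞) → g t (some e) = 0)

/-- Membership in `B_b(X̄₋)`. -/
def MemBbM {E : Type*} (v : Option E → ℝ) (g : ℝ≥0∞ → Option E → ℝ) : Prop :=
  (∀ j, Measurable fun t => g t j) ∧ (∃ C, ∀ t j, |g t j| ≤ C) ∧
    (∀ t, g t none = 0) ∧
    (∀ (t : ℝ≥0∞) (e : E), ¬(v (some e) < 0 ∧ t ≠ ∞) → g t (some e) = 0)

/-- `g` decays exponentially fast to zero: `|g(s,i)| ≤ C e^{-c s}` for some `C, c > 0`. -/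
def DecaysExp {E : Type*} (g : ℝ≥0∞ → Option E → ℝ) : Prop :=
  ∃ C c : ℝ, 0 < C ∧ 0 < c ∧
    ∀ (t : ℝ≥0∞) (j : Option E), t ≠ ∞ → |g t j| ≤ C * Real.exp (-c * t.toReal)

/-- Generic expectation operator `(s,i) ↦ 𝔼_{s,i}[g(σ(s), X_{σ(s)})]` associated with a family of
random times `σ(s)`, as an operator on functions of `(t,j) ∈ [0,∞] × Ē` (value `0` at `t = ∞`). -/
def applyAt {E : Type*} (P : ℝ → Option E → Measure (CPath E)) (σ : ℝ → CPath E → ℝ≥0∞)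
    (g : ℝ≥0∞ → Option E → ℝ) : ℝ≥0∞ → Option E → ℝ :=
  fun t j =>
    if t = ∞ then 0
    else ∫ ω, g (σ t.toReal ω) (Xat (σ t.toReal ω) ω) ∂ P t.toReal j

/-- Restriction of a function on `[0,∞] × Ē` to `X̄₊` (zero off `ℝ₊ × E₊`). -/
def restrP {E : Type*} (v : Option E → ℝ) (g : ℝ≥0∞ → Option E → ℝ) :
    ℝ≥0∞ → Option E → ℝ :=
  fun t j =>
    match j with
    | none => 0
    | some e => if 0 < v (some e) ∧ t ≠ ∞ then g t (some e) else 0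

/-- Restriction of a function on `[0,∞] × Ē` to `X̄₋` (zero off `ℝ₊ × E₋`). -/
def restrM {E : Type*} (v : Option E → ℝ) (g : ℝ≥0∞ → Option E → ℝ) :
    ℝ≥0∞ → Option E → ℝ :=
  fun t j =>
    match j with
    | none => 0
    | some e => if v (some e) < 0 ∧ t ≠ ∞ then g t (some e) else 0

/-- The operator `𝒫_ℓ⁺ : B_b(X̄₊) → B_b(X̄₊)`, `(𝒫_ℓ⁺ g)(s,i) = 𝔼_{s,i}[g(τ_ℓ⁺(s), X_{τ_ℓ⁺(s)})]`. -/
def opP {E : Type*} (P : ℝ → Option E → Measure (CPath E)) (v : Option E → ℝ) (ℓ : ℝ)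
    (g : ℝ≥0∞ → Option E → ℝ) : ℝ≥0∞ → Option E → ℝ :=
  restrP v (applyAt P (fun s => tauP v s ℓ) g)

/-- The operator `J⁺ : B_b(X̄₊) → B_b(X̄₋)`, `(J⁺ g)(s,i) = 𝔼_{s,i}[g(τ₀⁺(s), X_{τ₀⁺(s)})]`. -/
def opJP {E : Type*} (P : ℝ → Option E → Measure (CPath E)) (v : Option E → ℝ)
    (g : ℝ≥0∞ → Option E → ℝ) : ℝ≥0∞ → Option E → ℝ :=
  restrM v (applyAt P (fun s => tauP v s 0) g)

/-- The operator `𝒫_ℓ⁻ : B_b(X̄₋) → B_b(X̄₋)`. -/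
def opM {E : Type*} (P : ℝ → Option E → Measure (CPath E)) (v : Option E → ℝ) (ℓ : ℝ)
    (g : ℝ≥0∞ → Option E → ℝ) : ℝ≥0∞ → Option E → ℝ :=
  restrM v (applyAt P (fun s => tauM v s ℓ) g)

/-- The operator `J⁻ : B_b(X̄₋) → B_b(X̄₊)`. -/
def opJM {E : Type*} (P : ℝ → Option E → Measure (CPath E)) (v : Option E → ℝ)
    (g : ℝ≥0∞ → Option E → ℝ) : ℝ≥0∞ → Option E → ℝ :=
  restrP v (applyAt P (fun s => tauM v s 0) g)

/-- The operator `Ξ⁺_{ℓ⁻,ℓ⁺}`, `(Ξ⁺ g)(s,i) = 𝔼_{s,i}[g(ξ⁺_{ℓ⁻,ℓ⁺}(s), X_{ξ⁺_{ℓ⁻,ℓ⁺}(s)})]`. -/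
def opXiP {E : Type*} (P : ℝ → Option E → Measure (CPath E)) (v : Option E → ℝ) (ℓm ℓp : ℝ)
    (g : ℝ≥0∞ → Option E → ℝ) (s : ℝ) (j : Option E) : ℝ :=
  ∫ ω, g (xiP v ℓm ℓp s ω) (Xat (xiP v ℓm ℓp s ω) ω) ∂ P s j

/-- The operator `Ξ⁻_{ℓ⁻,ℓ⁺}`. -/
def opXiM {E : Type*} (P : ℝ → Option E → Measure (CPath E)) (v : Option E → ℝ) (ℓm ℓp : ℝ)
    (g : ℝ≥0∞ → Option E → ℝ) (s : ℝ) (j : Option E) : ℝ :=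
  ∫ ω, g (xiM v ℓm ℓp s ω) (Xat (xiM v ℓm ℓp s ω) ω) ∂ P s j

/-- The raw σ-field `σ(X_u, u ∈ [s,r])` on path space. -/
def natF {E : Type*} (s r : ℝ) : MeasurableSpace (CPath E) :=
  ⨆ u ∈ Set.Icc s r, MeasurableSpace.comap (fun ω : CPath E => ω u) ⊤

/-- The right-continuous filtration `F^s_t = ⋂_{r > t} σ(X_u, u ∈ [s,r])`,
indexed by extended times, with `F^s_∞ = σ(X_u, u ≥ s)`. -/
def Fst {E : Type*} (s : ℝ) (t : ℝ≥0∞) : MeasurableSpace (CPath E) :=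
  if t = ∞ then ⨆ u ∈ Set.Ici s, MeasurableSpace.comap (fun ω : CPath E => ω u) ⊤
  else ⨅ r ∈ Set.Ioi t.toReal, natF s r

/-- `τ` is an `𝔽ₛ`-stopping time. -/
def IsST {E : Type*} (s : ℝ) (τ : CPath E → ℝ≥0∞) : Prop :=
  ∀ t : ℝ≥0∞, MeasurableSet[Fst s t] {ω | τ ω ≤ t}

/-- The σ-field `F^s_τ` at an `𝔽ₛ`-stopping time `τ`. -/
def stoppedSigma {E : Type*} (s : ℝ) (τ : CPath E → ℝ≥0∞) (hτ : IsST s τ) :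
    MeasurableSpace (CPath E) where
  MeasurableSet' A := ∀ t : ℝ≥0∞, MeasurableSet[Fst s t] (A ∩ {ω | τ ω ≤ t})
  measurableSet_empty := fun t => by
    simpa using (MeasurableSet.empty : MeasurableSet[Fst s t] (∅ : Set (CPath E)))
  measurableSet_compl := fun A hA t => by
    have h1 : Aᶜ ∩ {ω | τ ω ≤ t} = {ω | τ ω ≤ t} \ (A ∩ {ω | τ ω ≤ t}) := by
      ext ω
      simp only [Set.mem_inter_iff, Set.mem_compl_iff, Set.mem_diff, Set.mem_setOf_eq]
      tauto
    rw [h1]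
    exact MeasurableSet.diff (hτ t) (hA t)
  measurableSet_iUnion := fun f hf t => by
    rw [Set.iUnion_inter]
    exact MeasurableSet.iUnion fun n => hf n t

/-- A canonical time-inhomogeneous Markov family on `Ē`, with right-continuous sample paths,
absorbing coffin state, initial condition `ℙ_{s,i}(X_s = i) = 1` and the strong Markov property
with respect to the right-continuous filtrations `𝔽ₛ`. -/
structure MarkovFamily (E : Type*) (v : Option E → ℝ) where
  /-- The family of probability measures `ℙ_{s,i}` on canonical path space. -/
  P : ℝ → Option E → Measure (CPath E)
  prob : ∀ s j, IsProbabilityMeasure (P s j)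
  init : ∀ (s : ℝ) (j : Option E), 0 ≤ s → P s j {ω | ω s = j} = 1
  pathReg : ∀ (s : ℝ) (j : Option E), 0 ≤ s → ∀ᵐ ω ∂ P s j,
    (∀ t, s ≤ t → ∃ ε > 0, ∀ u ∈ Set.Ico t (t + ε), ω u = ω t) ∧
    (∀ t, s ≤ t → ω t = none → ∀ u, t ≤ u → ω u = none)
  strongMarkov : ∀ (s : ℝ) (j : Option E), 0 ≤ s →
    ∀ (τ : CPath E → ℝ≥0∞) (hτ : IsST s τ), (∀ ω, ENNReal.ofReal s ≤ τ ω) →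
    ∀ G : ℝ≥0∞ → CPath E → ℝ, Measurable (Function.uncurry G) →
      (∃ C, ∀ t ω, |G t ω| ≤ C) →
      (∀ (t : ℝ) (ω ω' : CPath E), (∀ u, t ≤ u → ω u = ω' u) →
        G (ENNReal.ofReal t) ω = G (ENNReal.ofReal t) ω') →
      (P s j)[fun ω => Set.indicator {ω' : CPath E | τ ω' ≠ ∞}
          (fun ω' => G (τ ω') ω') ω | stoppedSigma s τ hτ]
        =ᵐ[P s j]
      fun ω => Set.indicator {ω' : CPath E | τ ω' ≠ ∞}
          (fun ω' => ∫ ω'', G (τ ω') ω'' ∂ P (τ ω').toReal (ω' (τ ω').toReal)) ω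

/-- The first jump time `γ(s) = inf {t ≥ s : X_t ≠ X_s}`. -/
def gammaJump {E : Type*} (s : ℝ) (ω : CPath E) : ℝ≥0∞ :=
  sInf {t : ℝ≥0∞ | ∃ u : ℝ, s ≤ u ∧ t = ENNReal.ofReal u ∧ ω u ≠ ω s}

/-- Assumption on the sub-Markovian generator matrices `(Λ_s)`: entries uniformly bounded by `K`,
nonnegative off-diagonal entries, nonpositive row sums, and the law of the first jump time is
`ℙ_{s,i}(γ(s) ≤ T) = 1 - exp(∫_s^T Λ_u(i,i) du)`. -/
structure GenAssumption (E : Type*) [Fintype E] (v : Option E → ℝ)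
    (M : MarkovFamily E v) (K : ℝ) where
  hK : 0 < K
  Lam : ℝ → E → E → ℝ
  bdd : ∀ s i j, |Lam s i j| ≤ K
  offDiag : ∀ s i j, i ≠ j → 0 ≤ Lam s i j
  rowSum : ∀ s i, ∑ j, Lam s i j ≤ 0
  jumpLaw : ∀ (s T : ℝ) (i : E), 0 ≤ s → s ≤ T →
    (M.P s (some i) {ω | gammaJump s ω ≤ ENNReal.ofReal T}).toReal
      = 1 - Real.exp (∫ u in s..T, Lam u i i)

end

/-- The composite operator `J⁻ 𝒫⁻_ℓ J⁺ 𝒫⁺_ℓ : B_b(X̄₊) → B_b(X̄₊)`. -/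
noncomputable def opAplus {E : Type*} (P : ℝ → Option E → Measure (CPath E)) (v : Option E → ℝ) (ℓ : ℝ) :
    (ℝ≥0∞ → Option E → ℝ) → (ℝ≥0∞ → Option E → ℝ) :=
  fun h => opJM P v (opM P v ℓ (opJP P v (opP P v ℓ h)))

/-- The composite operator `J⁺ 𝒫⁺_ℓ J⁻ 𝒫⁻_ℓ : B_b(X̄₋) → B_b(X̄₋)`. -/
noncomputable def opAminus {E : Type*} (P : ℝ → Option E → Measure (CPath E)) (v : Option E → ℝ) (ℓ : ℝ) :
    (ℝ≥0∞ → Option E → ℝ) → (ℝ≥0∞ → Option E → ℝ) :=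
  fun h => opJP P v (opP P v ℓ (opJM P v (opM P v ℓ h)))

/-- The element of `B_b(X̄₊)` given by `g⁺(t,j) = e^{-ct}`. -/
noncomputable def expFunP {E : Type*} (v : Option E → ℝ) (c : ℝ) :
    ℝ≥0∞ → Option E → ℝ :=
  fun t j =>
    match j with
    | none => 0
    | some e => if 0 < v (some e) ∧ t ≠ ∞ then Real.exp (-c * t.toReal) else 0

/- ===================== Auxiliary lemmas ===================== -/

noncomputable section IterAux
open Topology

/-! ### Calculus facts -/

lemma iob_cont_rpow_const {r : ℝ} (hr : 0 < r) : Continuous fun x : ℝ => (1 - x) ^ r := by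
  have h1 : Continuous fun y : ℝ => y ^ r := by
    rw [continuous_iff_continuousAt]
    intro x
    exact Real.continuousAt_rpow_const x r (Or.inr hr.le)
  exact h1.comp (by continuity)

lemma iob_int_one_sub_rpow {r : ℝ} (hr : 0 < r) :
    (∫ x in (0:ℝ)..1, (1 - x) ^ r) = 1 / (r + 1) := by
  have h := intervalIntegral.integral_comp_sub_left (a := (0:ℝ)) (b := 1)
    (fun y : ℝ => y ^ r) 1
  norm_num at h
  rw [h, integral_rpow (Or.inl (by linarith))]
  rw [Real.one_rpow, Real.zero_rpow (by positivity)]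
  norm_num

lemma iob_Ceq {r : ℝ} (hr : 0 < r) :
    (∫ x in (0:ℝ)..1, (1 - (1 - x) ^ r) ^ 2) = 1 - 2 / (r + 1) + 1 / (2*r + 1) := by
  have hcong : ∀ x ∈ Set.uIcc (0:ℝ) 1,
      (1 - (1 - x) ^ r) ^ 2 = 1 - 2 * (1-x) ^ r + (1-x) ^ (2*r) := by
    intro x hx
    rw [Set.uIcc_of_le (by norm_num)] at hx
    have h1x : 0 ≤ 1 - x := by linarith [hx.2]
    have : (1-x) ^ (2*r) = (1-x)^r * (1-x)^r := by
      rw [two_mul, Real.rpow_add' h1x (by positivity)]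
    rw [this]; ring
  rw [intervalIntegral.integral_congr hcong]
  have i1 : IntervalIntegrable (fun x : ℝ => (1 - x) ^ r) volume 0 1 :=
    (iob_cont_rpow_const hr).intervalIntegrable 0 1
  have i2 : IntervalIntegrable (fun x : ℝ => (1 - x) ^ (2*r)) volume 0 1 :=
    (iob_cont_rpow_const (by linarith)).intervalIntegrable 0 1
  rw [intervalIntegral.integral_add ((intervalIntegrable_const.sub (i1.const_mul 2))) i2,
    intervalIntegral.integral_sub intervalIntegrable_const (i1.const_mul 2),
    intervalIntegral.integral_const_mul, iob_int_one_sub_rpow hr,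
    iob_int_one_sub_rpow (by linarith)]
  norm_num
  ring

/-! ### The discretized bound `Bsum` and its limit -/

/-- Discretized upper bound for `E[e^{-c(γ-s)}]`. -/
noncomputable def Bsum (K c δ : ℝ) (N : ℕ) : ℝ :=
  Real.exp (-(c * (N * δ))) +
    ∑ k ∈ Finset.range N,
      (Real.exp (-(c * (k * δ))) - Real.exp (-(c * ((k + 1) * δ)))) *
        (1 - Real.exp (-(K * ((k + 1) * δ))))

lemma Bsum_nonneg {K c δ : ℝ} (hK : 0 < K) (hc : 0 < c) (hδ : 0 < δ) (N : ℕ) :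
    0 ≤ Bsum K c δ N := by
  have h1 : (0:ℝ) ≤ Real.exp (-(c * (N * δ))) := (Real.exp_pos _).le
  have h2 : ∀ k ∈ Finset.range N,
      (0:ℝ) ≤ (Real.exp (-(c * (k * δ))) - Real.exp (-(c * ((k + 1) * δ)))) *
        (1 - Real.exp (-(K * ((k + 1) * δ)))) := by
    intro k _
    apply mul_nonneg
    · have : (-(c * ((k+1) * δ)) : ℝ) ≤ -(c * (k * δ)) := by
        have : (0:ℝ) ≤ (k:ℝ) := Nat.cast_nonneg k
        nlinarith
      linarith [Real.exp_le_exp.mpr this]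
    · have hp : (0:ℝ) < K * (((k:ℝ)+1) * δ) :=
        mul_pos hK (mul_pos (by linarith [Nat.cast_nonneg (α := ℝ) k] : (0:ℝ) < (k:ℝ)+1) hδ)
      have : (-(K * (((k:ℝ)+1) * δ)) : ℝ) ≤ 0 := by linarith
      linarith [Real.exp_le_exp.mpr this, Real.exp_zero]
  exact add_nonneg h1 (Finset.sum_nonneg h2)

lemma iob_geom_algebra (a b : ℝ) (hab : a * b ≠ 1) (N : ℕ) :
    a ^ N + ∑ k ∈ Finset.range N, (a ^ k - a ^ (k+1)) * (1 - b ^ (k+1))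
      = 1 - b * (1 - (a*b) ^ N) * ((1 - a) / (1 - a*b)) := by
  have h1 : ∑ k ∈ Finset.range N, (a ^ k - a ^ (k+1)) = 1 - a ^ N := by
    simpa using Finset.sum_range_sub' (fun k => a ^ k) N
  have h2 : ∀ k ∈ Finset.range N, (a ^ k - a ^ (k+1)) * (1 - b ^ (k+1))
      = (a ^ k - a ^ (k+1)) - (1 - a) * b * (a*b) ^ k := by
    intro k _; rw [mul_pow]; ring
  rw [Finset.sum_congr rfl h2, Finset.sum_sub_distrib, h1, ← Finset.mul_sum,
    geom_sum_eq hab]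
  have hne : a * b - 1 ≠ 0 := sub_ne_zero.mpr hab
  have hne' : 1 - a * b ≠ 0 := fun h => hne (by linarith)
  field_simp
  ring

lemma Bsum_closed (K c : ℝ) {δ : ℝ} (hδ : 0 < δ) (hc : 0 < c) (hK : 0 < K) (N : ℕ) :
    Bsum K c δ N = 1 - Real.exp (-(K*δ)) *
        (1 - (Real.exp (-(c*δ)) * Real.exp (-(K*δ))) ^ N) *
        ((1 - Real.exp (-(c*δ))) / (1 - Real.exp (-(c*δ)) * Real.exp (-(K*δ)))) := by
  set a := Real.exp (-(c*δ)) with ha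
  set b := Real.exp (-(K*δ)) with hb
  have hab : a * b ≠ 1 := by
    rw [ha, hb, ← Real.exp_add]
    intro h
    have h2 : -(c*δ) + -(K*δ) = 0 := by
      have h1 : Real.exp (-(c*δ) + -(K*δ)) = Real.exp 0 := by rw [h, Real.exp_zero]
      exact Real.exp_injective h1
    nlinarith
  have hepow : ∀ (x : ℝ) (n : ℕ), Real.exp (-(x * (n * δ))) = Real.exp (-(x*δ)) ^ n := by
    intro x n
    rw [← Real.exp_nat_mul]; ring_nf
  have hsum : ∀ k ∈ Finset.range N,
      (Real.exp (-(c * (k * δ))) - Real.exp (-(c * ((k + 1) * δ)))) *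
          (1 - Real.exp (-(K * ((k + 1) * δ))))
        = (a ^ k - a ^ (k+1)) * (1 - b ^ (k+1)) := by
    intro k _
    have hc1 : Real.exp (-(c * ((k+1) * δ))) = a ^ (k+1) := by
      have := hepow c (k+1); push_cast at this; exact_mod_cast this
    have hK1 : Real.exp (-(K * ((k+1) * δ))) = b ^ (k+1) := by
      have := hepow K (k+1); push_cast at this; exact_mod_cast this
    rw [hepow c k, hc1, hK1]
  rw [Bsum, hepow c N, Finset.sum_congr rfl hsum, iob_geom_algebra a b hab N]

lemma slope_exp_lim (a : ℝ) {δ : ℕ → ℝ} (hδ0 : Tendsto δ atTop (𝓝 0))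
    (hδne : ∀ m, δ m ≠ 0) :
    Tendsto (fun m => (1 - Real.exp (-(a * δ m))) / δ m) atTop (𝓝 a) := by
  have h1 : HasDerivAt (fun x : ℝ => -(a*x)) (-a) 0 := by
    have := ((hasDerivAt_id (0:ℝ)).const_mul a).neg
    simp at this
    exact this
  have h2 : HasDerivAt (fun x : ℝ => Real.exp (-(a*x))) (-a) 0 := by
    have := (Real.hasDerivAt_exp (-(a*0))).comp 0 h1
    simpa [Function.comp_def] using this
  have h3 : HasDerivAt (fun x : ℝ => 1 - Real.exp (-(a*x))) a 0 := by
    simpa using h2.const_sub 1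
  have h4 := hasDerivAt_iff_tendsto_slope.mp h3
  have h5 : Tendsto δ atTop (𝓝[≠] (0:ℝ)) := by
    apply tendsto_nhdsWithin_of_tendsto_nhds_of_eventually_within _ hδ0
    exact Eventually.of_forall fun m => hδne m
  have h6 := h4.comp h5
  apply h6.congr
  intro m
  simp [Function.comp, slope_def_field]

lemma tendsto_Bsum (K c : ℝ) (hK : 0 < K) (hc : 0 < c) :
    Tendsto (fun m : ℕ => Bsum K c (1/(m+1)) ((m+1)*(m+1))) atTop (𝓝 (K/(K+c))) := by
  have hδ0 : Tendsto (fun m : ℕ => (1:ℝ)/(m+1)) atTop (𝓝 0) :=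
    tendsto_one_div_add_atTop_nhds_zero_nat
  have hδpos : ∀ m : ℕ, (0:ℝ) < 1/(m+1) := fun m => by positivity
  have hδne : ∀ m : ℕ, (1:ℝ)/(m+1) ≠ 0 := fun m => (hδpos m).ne'
  have hb : Tendsto (fun m : ℕ => Real.exp (-(K * (1/(m+1))))) atTop (𝓝 1) := by
    have h : Tendsto (fun m : ℕ => -(K * (1/(m+1)))) atTop (𝓝 0) := by
      simpa using (hδ0.const_mul K).neg
    simpa [Function.comp_def] using (Real.continuous_exp.tendsto 0).comp h
  have hq : Tendsto (fun m : ℕ =>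
      (Real.exp (-(c * (1/(m+1)))) * Real.exp (-(K * (1/(m+1))))) ^ ((m+1)*(m+1)))
      atTop (𝓝 0) := by
    have heq : ∀ m : ℕ, (Real.exp (-(c * (1/(m+1)))) * Real.exp (-(K * (1/(m+1))))) ^ ((m+1)*(m+1))
        = Real.exp (-((c+K) * (m+1))) := by
      intro m
      rw [← Real.exp_add, ← Real.exp_nat_mul]
      congr 1
      have : ((m:ℝ)+1) ≠ 0 := by positivity
      push_cast
      field_simp
      ring
    simp only [heq]
    apply Real.tendsto_exp_atBot.comp
    rw [tendsto_neg_atBot_iff]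
    apply Tendsto.const_mul_atTop (by positivity : (0:ℝ) < c + K)
    exact tendsto_atTop_add_const_right _ 1 tendsto_natCast_atTop_atTop
  have hratio : Tendsto (fun m : ℕ =>
      (1 - Real.exp (-(c * (1/(m+1))))) /
        (1 - Real.exp (-(c * (1/(m+1)))) * Real.exp (-(K * (1/(m+1)))))) atTop (𝓝 (c/(c+K))) := by
    have hnum := slope_exp_lim c hδ0 hδne
    have hden := slope_exp_lim (c+K) hδ0 hδne
    have h := hnum.div hden (by positivity)
    apply h.congr
    intro m
    have hmul : Real.exp (-(c * (1/(m+1)))) * Real.exp (-(K * (1/(m+1))))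
        = Real.exp (-((c+K) * (1/(m+1)))) := by
      rw [← Real.exp_add]; ring_nf
    rw [hmul]
    show (1 - Real.exp (-(c * (1/(m+1))))) / (1/(m+1)) /
        ((1 - Real.exp (-((c+K) * (1/(m+1))))) / (1/(m+1))) = _
    rw [div_div_div_cancel_right₀ (hδne m)]
  have hfinal : Tendsto (fun m : ℕ => 1 - Real.exp (-(K * (1/(m+1)))) *
      (1 - (Real.exp (-(c * (1/(m+1)))) * Real.exp (-(K * (1/(m+1))))) ^ ((m+1)*(m+1))) *
      ((1 - Real.exp (-(c * (1/(m+1))))) /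
        (1 - Real.exp (-(c * (1/(m+1)))) * Real.exp (-(K * (1/(m+1))))))) atTop
      (𝓝 (1 - 1 * (1 - 0) * (c/(c+K)))) := by
    exact (tendsto_const_nhds.sub (((hb.mul (tendsto_const_nhds.sub hq))).mul hratio))
  have : (1 : ℝ) - 1 * (1 - 0) * (c/(c+K)) = K/(K+c) := by
    have h0 : c + K ≠ 0 := by positivity
    rw [add_comm K c]
    field_simp
    ring
  rw [this] at hfinal
  apply hfinal.congr
  intro m
  rw [Bsum_closed K c (hδpos m) hc hK]

/-! ### Path lemmas -/

variable {E : Type*}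

lemma iob_ofReal_le_tauP (v : Option E → ℝ) (s ℓ : ℝ) (ω : CPath E) :
    ENNReal.ofReal s ≤ tauP v s ℓ ω := by
  apply le_sInf
  rintro t ⟨u, hu, rfl, -⟩
  exact ENNReal.ofReal_le_ofReal hu

lemma iob_ofReal_le_tauM (v : Option E → ℝ) (s ℓ : ℝ) (ω : CPath E) :
    ENNReal.ofReal s ≤ tauM v s ℓ ω := by
  apply le_sInf
  rintro t ⟨u, hu, rfl, -⟩
  exact ENNReal.ofReal_le_ofReal hu

lemma iob_ofReal_le_gamma (s : ℝ) (ω : CPath E) :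
    ENNReal.ofReal s ≤ gammaJump s ω := by
  apply le_sInf
  rintro t ⟨u, hu, rfl, -⟩
  exact ENNReal.ofReal_le_ofReal hu

lemma iob_exists_neg_of_phi_neg {v : Option E → ℝ} {s u : ℝ} {ω : CPath E}
    (hsu : s ≤ u) (h : phi v s u ω < 0) : ∃ u' ∈ Set.Ioc s u, v (ω u') < 0 := by
  by_contra hno
  push_neg at hno
  have h0 : 0 ≤ phi v s u ω := by
    rw [phi, intervalIntegral.integral_of_le hsu]
    apply integral_nonneg_of_ae
    filter_upwards [ae_restrict_mem measurableSet_Ioc] with x hx using hno x hx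
  linarith

lemma iob_exists_pos_of_phi_pos {v : Option E → ℝ} {s u : ℝ} {ω : CPath E}
    (hsu : s ≤ u) (h : 0 < phi v s u ω) : ∃ u' ∈ Set.Ioc s u, 0 < v (ω u') := by
  by_contra hno
  push_neg at hno
  have h0 : phi v s u ω ≤ 0 := by
    rw [phi, intervalIntegral.integral_of_le hsu]
    apply integral_nonpos_of_ae
    filter_upwards [ae_restrict_mem measurableSet_Ioc] with x hx using hno x hx
  linarith

lemma iob_gamma_le_tauM {v : Option E → ℝ} {s : ℝ} {e : E} (he : 0 < v (some e))
    {ℓ : ℝ} (hℓ : 0 ≤ ℓ) {ω : CPath E} (hω : ω s = some e) :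
    gammaJump s ω ≤ tauM v s ℓ ω := by
  apply le_sInf
  rintro t ⟨u, hsu, rfl, hφ⟩
  obtain ⟨u', hu', hvneg⟩ := iob_exists_neg_of_phi_neg hsu (lt_of_lt_of_le hφ (by linarith))
  refine le_trans (sInf_le ⟨u', hu'.1.le, rfl, ?_⟩) (ENNReal.ofReal_le_ofReal hu'.2)
  rw [hω]
  intro hcontr
  rw [hcontr] at hvneg
  linarith

lemma iob_gamma_le_tauP {v : Option E → ℝ} {s : ℝ} {e : E} (he : v (some e) < 0)
    {ℓ : ℝ} (hℓ : 0 ≤ ℓ) {ω : CPath E} (hω : ω s = some e) :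
    gammaJump s ω ≤ tauP v s ℓ ω := by
  apply le_sInf
  rintro t ⟨u, hsu, rfl, hφ⟩
  obtain ⟨u', hu', hvpos⟩ := iob_exists_pos_of_phi_pos hsu (lt_of_le_of_lt hℓ hφ)
  refine le_trans (sInf_le ⟨u', hu'.1.le, rfl, ?_⟩) (ENNReal.ofReal_le_ofReal hu'.2)
  rw [hω]
  intro hcontr
  rw [hcontr] at hvpos
  linarith

/-! ### The core lintegral bound on the first jump time -/

lemma iob_jump_exp_lintegral {E : Type*} [Fintype E] (v : Option E → ℝ)
    (M : MarkovFamily E v) (K : ℝ) (GA : GenAssumption E v M K)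
    (c : ℝ) (hc : 0 < c) {δ : ℝ} (hδ : 0 < δ) (N : ℕ)
    {s : ℝ} (hs : 0 ≤ s) (i : E) :
    (∫⁻ ω, (if gammaJump s ω = ∞ then 0
        else ENNReal.ofReal (Real.exp (-c * (gammaJump s ω).toReal))) ∂ M.P s (some i))
      ≤ ENNReal.ofReal (Real.exp (-c * s) * Bsum K c δ N) := by
  set μ := M.P s (some i) with hμdef
  haveI : IsProbabilityMeasure μ := M.prob s (some i)
  set S : ℕ → Set (CPath E) :=
    fun k => {ω | gammaJump s ω ≤ ENNReal.ofReal (s + ((k:ℝ)+1)*δ)} with hSdef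
  set T : ℕ → Set (CPath E) := fun k => toMeasurable μ (S k) with hTdef
  have hTmeas : ∀ k, MeasurableSet (T k) := fun k => measurableSet_toMeasurable μ _
  have hST : ∀ k, S k ⊆ T k := fun k => subset_toMeasurable μ _
  set a : ℕ → ℝ := fun k => Real.exp (-(c*((k:ℝ)*δ))) - Real.exp (-(c*(((k:ℝ)+1)*δ))) with hadef
  have hanonneg : ∀ k, 0 ≤ a k := by
    intro k
    have hk : (0:ℝ) ≤ (k:ℝ) := Nat.cast_nonneg k
    have h1 : (-(c*(((k:ℝ)+1)*δ)) : ℝ) ≤ -(c*((k:ℝ)*δ)) := by nlinarith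
    have := Real.exp_le_exp.mpr h1
    simp only [hadef]
    linarith
  set G : CPath E → ℝ≥0∞ := fun ω => ENNReal.ofReal (Real.exp (-(c*((N:ℝ)*δ)))) +
      ∑ k ∈ Finset.range N, ENNReal.ofReal (a k) * (T k).indicator (fun _ => 1) ω with hGdef
  -- pointwise bound
  have hpt : ∀ ω, (if gammaJump s ω = ∞ then 0
      else ENNReal.ofReal (Real.exp (-c * (gammaJump s ω).toReal)))
      ≤ ENNReal.ofReal (Real.exp (-c * s)) * G ω := by
    intro ω
    by_cases hγ : gammaJump s ω = ∞
    · simp [hγ]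
    · rw [if_neg hγ]
      set x := (gammaJump s ω).toReal with hxdef
      have hsx : s ≤ x := by
        have h1 := ENNReal.toReal_mono hγ (iob_ofReal_le_gamma s ω)
        rwa [ENNReal.toReal_ofReal hs] at h1
      have hγeq : gammaJump s ω = ENNReal.ofReal x := (ENNReal.ofReal_toReal hγ).symm
      by_cases hbig : s + (N:ℝ)*δ ≤ x
      · have hG1 : ENNReal.ofReal (Real.exp (-(c*((N:ℝ)*δ)))) ≤ G ω := by
          rw [hGdef]; exact self_le_add_right _ _
        calc ENNReal.ofReal (Real.exp (-c * x))
            ≤ ENNReal.ofReal (Real.exp (-c*s) * Real.exp (-(c*((N:ℝ)*δ)))) := by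
              apply ENNReal.ofReal_le_ofReal
              rw [← Real.exp_add]
              apply Real.exp_le_exp.mpr
              nlinarith
          _ = ENNReal.ofReal (Real.exp (-c*s)) * ENNReal.ofReal (Real.exp (-(c*((N:ℝ)*δ)))) :=
              ENNReal.ofReal_mul (Real.exp_pos _).le
          _ ≤ ENNReal.ofReal (Real.exp (-c*s)) * G ω := mul_le_mul_right hG1 _
      · push_neg at hbig
        set k := Nat.floor ((x-s)/δ) with hkdef
        have hxs0 : 0 ≤ (x - s)/δ := div_nonneg (by linarith) hδ.le
        have hxk : (k:ℝ)*δ ≤ x - s := by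
          have h1 := Nat.floor_le hxs0
          calc (k:ℝ)*δ ≤ ((x-s)/δ)*δ := mul_le_mul_of_nonneg_right h1 hδ.le
            _ = x - s := div_mul_cancel₀ _ hδ.ne'
        have hxk2 : x - s < ((k:ℝ)+1)*δ := by
          have h1 := Nat.lt_floor_add_one ((x-s)/δ)
          calc x - s = ((x-s)/δ)*δ := (div_mul_cancel₀ _ hδ.ne').symm
            _ < ((k:ℝ)+1)*δ := by
              apply mul_lt_mul_of_pos_right _ hδ
              exact_mod_cast h1
        have hkN : k < N := by
          by_contra hcon
          push_neg at hcon
          have h1 : (N:ℝ) ≤ (k:ℝ) := Nat.cast_le.mpr hcon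
          nlinarith
        have hmem : ∀ j, k ≤ j → ω ∈ S j := by
          intro j hj
          show gammaJump s ω ≤ ENNReal.ofReal (s + ((j:ℝ)+1)*δ)
          rw [hγeq]
          apply ENNReal.ofReal_le_ofReal
          have h1 : ((k:ℝ)+1)*δ ≤ ((j:ℝ)+1)*δ := by
            have : (k:ℝ) ≤ (j:ℝ) := Nat.cast_le.mpr hj
            nlinarith
          linarith
        -- lower bound for G ω
        have hsum1 : ∑ j ∈ Finset.Ico k N, ENNReal.ofReal (a j)
            ≤ ∑ j ∈ Finset.range N, ENNReal.ofReal (a j) * (T j).indicator (fun _ => 1) ω := by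
          have h1 : ∀ j ∈ Finset.Ico k N, ENNReal.ofReal (a j)
              ≤ ENNReal.ofReal (a j) * (T j).indicator (fun _ => 1) ω := by
            intro j hj
            have hj' := Finset.mem_Ico.mp hj
            have h2 : (T j).indicator (fun _ => (1:ℝ≥0∞)) ω = 1 :=
              Set.indicator_of_mem (hST j (hmem j hj'.1)) _
            rw [h2, mul_one]
          refine le_trans (Finset.sum_le_sum h1) (Finset.sum_le_sum_of_subset ?_)
          rw [Finset.range_eq_Ico]
          exact Finset.Ico_subset_Ico (Nat.zero_le k) le_rfl
        have hsum2 : ENNReal.ofReal (Real.exp (-(c*((k:ℝ)*δ))) - Real.exp (-(c*((N:ℝ)*δ))))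
            = ∑ j ∈ Finset.Ico k N, ENNReal.ofReal (a j) := by
          rw [← ENNReal.ofReal_sum_of_nonneg (fun j _ => hanonneg j)]
          congr 1
          rw [Finset.sum_Ico_eq_sub _ hkN.le]
          have htel : ∀ n : ℕ, ∑ j ∈ Finset.range n, a j
              = 1 - Real.exp (-(c*((n:ℝ)*δ))) := by
            intro n
            have h := Finset.sum_range_sub' (fun j : ℕ => Real.exp (-(c*((j:ℝ)*δ)))) n
            simp only [Nat.cast_zero, zero_mul, mul_zero, neg_zero, Real.exp_zero] at h
            rw [← h]
            apply Finset.sum_congr rfl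
            intro j _
            simp only [hadef]
            push_cast
            ring_nf
          rw [htel N, htel k]
          ring
        have hGge : ENNReal.ofReal (Real.exp (-(c*((k:ℝ)*δ)))) ≤ G ω := by
          have hkNexp : Real.exp (-(c*((N:ℝ)*δ))) ≤ Real.exp (-(c*((k:ℝ)*δ))) := by
            apply Real.exp_le_exp.mpr
            have h1 : (k:ℝ) ≤ (N:ℝ) := Nat.cast_le.mpr hkN.le
            nlinarith
          have hsplit : ENNReal.ofReal (Real.exp (-(c*((k:ℝ)*δ))))
              = ENNReal.ofReal (Real.exp (-(c*((N:ℝ)*δ))))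
                + ENNReal.ofReal (Real.exp (-(c*((k:ℝ)*δ))) - Real.exp (-(c*((N:ℝ)*δ)))) := by
            rw [← ENNReal.ofReal_add (Real.exp_pos _).le (by linarith)]
            ring_nf
          rw [hsplit, hGdef]
          exact add_le_add le_rfl (hsum2.le.trans hsum1)
        calc ENNReal.ofReal (Real.exp (-c * x))
            ≤ ENNReal.ofReal (Real.exp (-c*s) * Real.exp (-(c*((k:ℝ)*δ)))) := by
              apply ENNReal.ofReal_le_ofReal
              rw [← Real.exp_add]
              apply Real.exp_le_exp.mpr
              nlinarith
          _ = ENNReal.ofReal (Real.exp (-c*s)) * ENNReal.ofReal (Real.exp (-(c*((k:ℝ)*δ)))) :=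
              ENNReal.ofReal_mul (Real.exp_pos _).le
          _ ≤ ENNReal.ofReal (Real.exp (-c*s)) * G ω := mul_le_mul_right hGge _
  -- integrate G
  have hGint : (∫⁻ ω, G ω ∂μ) = ENNReal.ofReal (Real.exp (-(c*((N:ℝ)*δ))))
      + ∑ k ∈ Finset.range N, ENNReal.ofReal (a k) * μ (T k) := by
    rw [hGdef]
    rw [lintegral_add_left measurable_const]
    rw [lintegral_const, measure_univ, mul_one]
    congr 1
    rw [lintegral_finset_sum _
      (fun k _ => (measurable_const.indicator (hTmeas k)).const_mul _)]
    apply Finset.sum_congr rfl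
    intro k _
    rw [lintegral_const_mul' _ _ ENNReal.ofReal_ne_top, lintegral_indicator (hTmeas k)]
    simp [lintegral_const]
  -- bound the measures
  have hμT : ∀ k, μ (T k) ≤ ENNReal.ofReal (1 - Real.exp (-(K*(((k:ℝ)+1)*δ)))) := by
    intro k
    have hTkμ : μ (T k) = μ (S k) := measure_toMeasurable _
    have hlaw := GA.jumpLaw s (s + ((k:ℝ)+1)*δ) i hs (le_add_of_nonneg_right (by positivity))
    have hne : μ (S k) ≠ ∞ := measure_ne_top μ _
    have hμS : μ (S k) = ENNReal.ofReal (1 - Real.exp (∫ u in s..(s + ((k:ℝ)+1)*δ), GA.Lam u i i)) := by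
      rw [← ENNReal.ofReal_toReal hne]
      exact congrArg ENNReal.ofReal hlaw
    rw [hTkμ, hμS]
    apply ENNReal.ofReal_le_ofReal
    have hint : -(K*(((k:ℝ)+1)*δ)) ≤ ∫ u in s..(s + ((k:ℝ)+1)*δ), GA.Lam u i i := by
      have hkd : (0:ℝ) ≤ ((k:ℝ)+1)*δ := by positivity
      by_cases hInt : IntervalIntegrable (fun u => GA.Lam u i i) MeasureTheory.volume s (s + ((k:ℝ)+1)*δ)
      · have h1 := intervalIntegral.integral_mono_on (by linarith : s ≤ s + ((k:ℝ)+1)*δ)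
          (intervalIntegrable_const (c := -K)) hInt
          (fun x _ => neg_le_of_abs_le (GA.bdd x i i))
        rw [intervalIntegral.integral_const, smul_eq_mul] at h1
        calc -(K*(((k:ℝ)+1)*δ)) = (s + ((k:ℝ)+1)*δ - s) * (-K) := by ring
          _ ≤ _ := h1
      · rw [intervalIntegral.integral_undef hInt]
        nlinarith [GA.hK]
    have := Real.exp_le_exp.mpr hint
    linarith
  -- combine
  calc (∫⁻ ω, (if gammaJump s ω = ∞ then 0
        else ENNReal.ofReal (Real.exp (-c * (gammaJump s ω).toReal))) ∂μ)
      ≤ ∫⁻ ω, ENNReal.ofReal (Real.exp (-c * s)) * G ω ∂μ := lintegral_mono hpt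
    _ = ENNReal.ofReal (Real.exp (-c * s)) * ∫⁻ ω, G ω ∂μ :=
        lintegral_const_mul' _ _ ENNReal.ofReal_ne_top
    _ ≤ ENNReal.ofReal (Real.exp (-c * s)) * ENNReal.ofReal (Bsum K c δ N) := by
        apply mul_le_mul_right
        rw [hGint]
        have hterm : ∀ k ∈ Finset.range N, ENNReal.ofReal (a k) * μ (T k)
            ≤ ENNReal.ofReal (a k * (1 - Real.exp (-(K*(((k:ℝ)+1)*δ))))) := by
          intro k _
          rw [ENNReal.ofReal_mul (hanonneg k)]
          exact mul_le_mul_right (hμT k) _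
        calc ENNReal.ofReal (Real.exp (-(c*((N:ℝ)*δ))))
              + ∑ k ∈ Finset.range N, ENNReal.ofReal (a k) * μ (T k)
            ≤ ENNReal.ofReal (Real.exp (-(c*((N:ℝ)*δ))))
              + ∑ k ∈ Finset.range N,
                  ENNReal.ofReal (a k * (1 - Real.exp (-(K*(((k:ℝ)+1)*δ))))) :=
              add_le_add le_rfl (Finset.sum_le_sum hterm)
          _ = ENNReal.ofReal (Bsum K c δ N) := by
              have hnn : ∀ k ∈ Finset.range N,
                  (0:ℝ) ≤ a k * (1 - Real.exp (-(K*(((k:ℝ)+1)*δ)))) := by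
                intro k _
                apply mul_nonneg (hanonneg k)
                have hp : (0:ℝ) < K * (((k:ℝ)+1) * δ) := mul_pos GA.hK
                  (mul_pos (by linarith [Nat.cast_nonneg (α := ℝ) k] : (0:ℝ) < (k:ℝ)+1) hδ)
                have h1 : (-(K*(((k:ℝ)+1)*δ)) : ℝ) ≤ 0 := by linarith
                linarith [Real.exp_le_exp.mpr h1, Real.exp_zero]
              rw [← ENNReal.ofReal_sum_of_nonneg hnn,
                ← ENNReal.ofReal_add (Real.exp_pos _).le (Finset.sum_nonneg hnn)]
              congr 1
    _ = ENNReal.ofReal (Real.exp (-c * s) * Bsum K c δ N) :=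
        (ENNReal.ofReal_mul (Real.exp_pos _).le).symm

/-! ### Step estimates for the operators -/

/-- The exponential weight function on `[0,∞]`. -/
noncomputable def wtFun (c : ℝ) (t : ℝ≥0∞) : ℝ :=
  if t = ∞ then 0 else Real.exp (-c * t.toReal)

lemma wtFun_nonneg (c : ℝ) (t : ℝ≥0∞) : 0 ≤ wtFun c t := by
  rw [wtFun]; split
  · exact le_rfl
  · exact (Real.exp_pos _).le

/-- `|h| ≤ B ⬝ wt` pointwise. -/
def BndH {E : Type*} (c B : ℝ) (h : ℝ≥0∞ → Option E → ℝ) : Prop :=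
  ∀ t j, |h t j| ≤ B * wtFun c t

lemma iob_nojump_step {E : Type*} (v : Option E → ℝ) (M : MarkovFamily E v)
    {c B : ℝ} (hc : 0 < c) (hB : 0 ≤ B)
    (σ : ℝ → CPath E → ℝ≥0∞) (hσ : ∀ s ω, ENNReal.ofReal s ≤ σ s ω)
    (h : ℝ≥0∞ → Option E → ℝ) (hh : BndH c B h) :
    ∀ t j, |applyAt M.P σ h t j| ≤ B * wtFun c t := by
  intro t j
  by_cases ht : t = ∞
  · simp [applyAt, ht, wtFun]
  · rw [applyAt]
    simp only [if_neg ht]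
    haveI := M.prob t.toReal j
    have key : ∀ ω, ‖h (σ t.toReal ω) (Xat (σ t.toReal ω) ω)‖ ≤ B * Real.exp (-c * t.toReal) := by
      intro ω
      rw [Real.norm_eq_abs]
      refine (hh _ _).trans (mul_le_mul_of_nonneg_left ?_ hB)
      by_cases hσt : σ t.toReal ω = ∞
      · rw [wtFun, if_pos hσt]
        exact (Real.exp_pos _).le
      · rw [wtFun, if_neg hσt]
        apply Real.exp_le_exp.mpr
        have h1 : ENNReal.ofReal t.toReal ≤ σ t.toReal ω := hσ _ ω
        have h2 : t.toReal ≤ (σ t.toReal ω).toReal := by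
          have h3 := ENNReal.toReal_mono hσt h1
          rwa [ENNReal.toReal_ofReal ENNReal.toReal_nonneg] at h3
        nlinarith
    have h4 := MeasureTheory.norm_integral_le_of_norm_le_const (μ := M.P t.toReal j)
      (C := B * Real.exp (-c * t.toReal)) (Filter.Eventually.of_forall key)
    rw [probReal_univ, mul_one] at h4
    rw [wtFun, if_neg ht]
    rw [← Real.norm_eq_abs]
    exact h4

lemma iob_jump_step {E : Type*} [Fintype E] (v : Option E → ℝ) (M : MarkovFamily E v)
    (K : ℝ) (GA : GenAssumption E v M K) {c : ℝ} (hc : 0 < c)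
    {δ : ℝ} (hδ : 0 < δ) (N : ℕ) {B lam : ℝ} (hB : 0 ≤ B)
    (hlam : Bsum K c δ N ≤ lam)
    {s : ℝ} (hs : 0 ≤ s) (i : E) (f : CPath E → ℝ)
    (hf : ∀ ω, ω s = some i → |f ω| ≤ B * (if gammaJump s ω = ∞ then 0
      else Real.exp (-c * (gammaJump s ω).toReal))) :
    |∫ ω, f ω ∂ M.P s (some i)| ≤ lam * B * Real.exp (-c * s) := by
  set μ := M.P s (some i) with hμdef
  haveI : IsProbabilityMeasure μ := M.prob s (some i)
  have hA : MeasurableSet {ω : CPath E | ω s = some i} := by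
    have h1 : {ω : CPath E | ω s = some i} = (fun ω : CPath E => ω s) ⁻¹' {some i} := rfl
    rw [h1]
    exact measurable_pi_apply s (show MeasurableSet {some i} from trivial)
  have hAe : ∀ᵐ ω ∂μ, ω s = some i := by
    rw [MeasureTheory.ae_iff]
    have h1 := M.init s (some i) hs
    have h2 : {ω : CPath E | ¬ ω s = some i} = {ω : CPath E | ω s = some i}ᶜ := rfl
    rw [h2, measure_compl hA (measure_ne_top μ _), measure_univ, h1, tsub_self]
  set ψ : CPath E → ℝ≥0∞ := fun ω => if gammaJump s ω = ∞ then 0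
      else ENNReal.ofReal (Real.exp (-c * (gammaJump s ω).toReal)) with hψdef
  have habs : |∫ ω, f ω ∂μ| ≤ (∫⁻ ω, ENNReal.ofReal ‖f ω‖ ∂μ).toReal := by
    rw [← Real.norm_eq_abs]
    exact MeasureTheory.norm_integral_le_lintegral_norm f
  have hmono : (∫⁻ ω, ENNReal.ofReal ‖f ω‖ ∂μ) ≤ ENNReal.ofReal B * ∫⁻ ω, ψ ω ∂μ := by
    rw [← lintegral_const_mul' _ _ ENNReal.ofReal_ne_top]
    apply lintegral_mono_ae
    filter_upwards [hAe] with ω hω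
    rw [Real.norm_eq_abs]
    calc ENNReal.ofReal |f ω| ≤ ENNReal.ofReal (B * (if gammaJump s ω = ∞ then 0
            else Real.exp (-c * (gammaJump s ω).toReal))) :=
          ENNReal.ofReal_le_ofReal (hf ω hω)
      _ = ENNReal.ofReal B * ψ ω := by
          rw [ENNReal.ofReal_mul hB]
          congr 1
          by_cases hγ : gammaJump s ω = ∞
          · simp [hψdef, hγ]
          · simp [hψdef, hγ]
  have hcore := iob_jump_exp_lintegral v M K GA c hc hδ N hs i
  have hfin : (∫⁻ ω, ENNReal.ofReal ‖f ω‖ ∂μ)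
      ≤ ENNReal.ofReal B * ENNReal.ofReal (Real.exp (-c * s) * Bsum K c δ N) :=
    hmono.trans (mul_le_mul_right hcore _)
  have hBsum0 : 0 ≤ Bsum K c δ N := Bsum_nonneg GA.hK hc hδ N
  have htoReal := ENNReal.toReal_mono
    (ENNReal.mul_ne_top ENNReal.ofReal_ne_top ENNReal.ofReal_ne_top) hfin
  rw [← ENNReal.ofReal_mul hB, ENNReal.toReal_ofReal
    (by positivity : (0:ℝ) ≤ B * (Real.exp (-c * s) * Bsum K c δ N))] at htoReal
  calc |∫ ω, f ω ∂μ| ≤ (∫⁻ ω, ENNReal.ofReal ‖f ω‖ ∂μ).toReal := habs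
    _ ≤ B * (Real.exp (-c * s) * Bsum K c δ N) := htoReal
    _ ≤ lam * B * Real.exp (-c * s) := by
        have h7 : 0 ≤ B * Real.exp (-c*s) := mul_nonneg hB (Real.exp_pos _).le
        have h8 := mul_le_mul_of_nonneg_left hlam h7
        nlinarith [h8]

end IterAux

/-- (Iterated contraction bound in the proof of Lemma 3.1.) For
`g⁺(t,j) = e^{-ct}` and `C_{K,c} = ∫₀¹ (1 - (1-x)^{K/c})² dx < 1`, every `n ≥ 1` and every
`(s,i) ∈ ℝ₊ × E₊` satisfy
`((J⁻ 𝒫⁻_{ℓ⁻+ℓ⁺} J⁺ 𝒫⁺_{ℓ⁻+ℓ⁺})ⁿ g⁺)(s,i) ≤ C_{K,c}ⁿ e^{-cs}`. -/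
theorem iterated_operator_exponential_bound
    {E : Type*} [Fintype E] (hcard : 1 < Fintype.card E) (v : Option E → ℝ)
    (hv : ∀ e : E, v (some e) ≠ 0) (hv0 : v none = 0)
    (hEp : ∃ e : E, 0 < v (some e)) (hEm : ∃ e : E, v (some e) < 0)
    (M : MarkovFamily E v) (K : ℝ) (GA : GenAssumption E v M K)
    (c : ℝ) (hc : 0 < c) :
    (∫ x in (0 : ℝ)..1, (1 - (1 - x) ^ (K / c)) ^ 2) < 1 ∧
    ∀ n : ℕ, 1 ≤ n → ∀ ℓm ℓp : ℝ, 0 ≤ ℓm → 0 ≤ ℓp →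
      ∀ s : ℝ, 0 ≤ s → ∀ i : E, 0 < v (some i) →
        ((opAplus M.P v (ℓm + ℓp))^[n] (expFunP v c)) (ENNReal.ofReal s) (some i)
          ≤ (∫ x in (0 : ℝ)..1, (1 - (1 - x) ^ (K / c)) ^ 2) ^ n
            * Real.exp (-c * s) := by
  have hK := GA.hK
  have hr : 0 < K / c := div_pos hK hc
  set Cint := ∫ x in (0 : ℝ)..1, (1 - (1 - x) ^ (K / c)) ^ 2 with hCintdef
  have hCeq : Cint = 1 - 2 / (K/c + 1) + 1 / (2*(K/c) + 1) := iob_Ceq hr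
  have hCeq2 : Cint = 1 - 2*c/(K+c) + c/(2*K+c) := by
    rw [hCeq]
    have hc0 : c ≠ 0 := hc.ne'
    have hKc : K + c ≠ 0 := by positivity
    have h2Kc : 2*K + c ≠ 0 := by positivity
    field_simp
  have hClt1 : Cint < 1 := by
    rw [hCeq2]
    have h1 : 0 < K + c := by linarith
    have h2 : 0 < 2*K + c := by linarith
    have h3 : c/(2*K+c) < 2*c/(K+c) := by
      rw [div_lt_div_iff₀ h2 h1]
      nlinarith
    linarith
  have hkapsq : (K/(K+c))^2 < Cint := by
    rw [hCeq2, div_pow, div_lt_iff₀ (by positivity : (0:ℝ) < (K+c)^2)]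
    have h2 : (0:ℝ) < 2*K + c := by linarith
    have hexpand : (1 - 2*c/(K+c) + c/(2*K+c)) * (K+c)^2
        = (K+c)^2 - 2*c*(K+c) + c*(K+c)^2/(2*K+c) := by
      have hKc : K + c ≠ 0 := by positivity
      field_simp
    rw [hexpand]
    have h6 : c*c < c*(K+c)^2/(2*K+c) := by
      rw [lt_div_iff₀ h2]
      nlinarith [mul_pos hc (mul_pos hK hK)]
    have h7 : (K+c)^2 - 2*c*(K+c) = K^2 - c^2 := by ring
    have h8 : c^2 = c*c := by ring
    linarith
  refine ⟨hClt1, ?_⟩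
  have hkap0 : 0 ≤ K/(K+c) := by positivity
  have hCpos : 0 < Cint := lt_of_le_of_lt (sq_nonneg _) hkapsq
  set lam := Real.sqrt Cint with hlamdef
  have hlam0 : 0 ≤ lam := Real.sqrt_nonneg _
  have hlam2 : lam^2 = Cint := Real.sq_sqrt hCpos.le
  have hkaplam : K/(K+c) < lam := (Real.lt_sqrt hkap0).mpr hkapsq
  obtain ⟨m, hm⟩ : ∃ m : ℕ, Bsum K c (1/((m:ℝ)+1)) ((m+1)*(m+1)) ≤ lam := by
    have h1 := (tendsto_Bsum K c hK hc).eventually (eventually_le_nhds hkaplam)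
    exact h1.exists
  have hδ0 : (0:ℝ) < 1/((m:ℝ)+1) := by positivity
  intro n hn ℓm ℓp hℓm hℓp s hs i hi
  -- step lemmas
  have stepP : ∀ (ℓ B : ℝ), 0 ≤ B → ∀ h, BndH c B h → BndH c B (opP M.P v ℓ h) := by
    intro ℓ B hB h hh t j
    rcases j with _ | e
    · simp only [opP, restrP]
      rw [abs_zero]
      exact mul_nonneg hB (wtFun_nonneg c t)
    · simp only [opP, restrP]
      by_cases hcond : 0 < v (some e) ∧ t ≠ ∞
      · rw [if_pos hcond]
        exact iob_nojump_step v M hc hB _ (fun s' ω => iob_ofReal_le_tauP v s' ℓ ω) h hh t (some e)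
      · rw [if_neg hcond, abs_zero]
        exact mul_nonneg hB (wtFun_nonneg c t)
  have stepM : ∀ (ℓ B : ℝ), 0 ≤ B → ∀ h, BndH c B h → BndH c B (opM M.P v ℓ h) := by
    intro ℓ B hB h hh t j
    rcases j with _ | e
    · simp only [opM, restrM]
      rw [abs_zero]
      exact mul_nonneg hB (wtFun_nonneg c t)
    · simp only [opM, restrM]
      by_cases hcond : v (some e) < 0 ∧ t ≠ ∞
      · rw [if_pos hcond]
        exact iob_nojump_step v M hc hB _ (fun s' ω => iob_ofReal_le_tauM v s' ℓ ω) h hh t (some e)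
      · rw [if_neg hcond, abs_zero]
        exact mul_nonneg hB (wtFun_nonneg c t)
  -- jump steps
  have jumpcore : ∀ (B : ℝ), 0 ≤ B → ∀ (h : ℝ≥0∞ → Option E → ℝ), BndH c B h →
      ∀ (σ : ℝ → CPath E → ℝ≥0∞), (∀ s' ω, ENNReal.ofReal s' ≤ σ s' ω) →
      ∀ (t : ℝ≥0∞), t ≠ ∞ → ∀ (e : E),
      (∀ ω : CPath E, ω t.toReal = some e → gammaJump t.toReal ω ≤ σ t.toReal ω) →
      |∫ ω, h (σ t.toReal ω) (Xat (σ t.toReal ω) ω) ∂ M.P t.toReal (some e)|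
        ≤ lam * B * wtFun c t := by
    intro B hB h hh σ hσ t ht e hγσ
    have hwt : wtFun c t = Real.exp (-c * t.toReal) := by rw [wtFun, if_neg ht]
    rw [hwt]
    apply iob_jump_step v M K GA hc hδ0 ((m+1)*(m+1)) hB hm ENNReal.toReal_nonneg e
    intro ω hω
    refine (hh _ _).trans (mul_le_mul_of_nonneg_left ?_ hB)
    by_cases hσt : σ t.toReal ω = ∞
    · rw [wtFun, if_pos hσt]
      split
      · exact le_rfl
      · exact (Real.exp_pos _).le
    · rw [wtFun, if_neg hσt]
      have hγ := hγσ ω hω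
      have hγne : gammaJump t.toReal ω ≠ ∞ := by
        intro hcontr
        rw [hcontr] at hγ
        exact hσt (top_le_iff.mp hγ)
      rw [if_neg hγne]
      apply Real.exp_le_exp.mpr
      have h2 : (gammaJump t.toReal ω).toReal ≤ (σ t.toReal ω).toReal :=
        ENNReal.toReal_mono hσt hγ
      nlinarith
  have stepJP : ∀ (B : ℝ), 0 ≤ B → ∀ h, BndH c B h → BndH c (lam * B) (opJP M.P v h) := by
    intro B hB h hh t j
    rcases j with _ | e
    · simp only [opJP, restrM]
      rw [abs_zero]
      exact mul_nonneg (mul_nonneg hlam0 hB) (wtFun_nonneg c t)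
    · simp only [opJP, restrM]
      by_cases hcond : v (some e) < 0 ∧ t ≠ ∞
      · rw [if_pos hcond]
        simp only [applyAt, if_neg hcond.2]
        have := jumpcore B hB h hh (fun s' => tauP v s' 0) (fun s' ω => iob_ofReal_le_tauP v s' 0 ω)
          t hcond.2 e (fun ω hω => iob_gamma_le_tauP hcond.1 le_rfl hω)
        exact this
      · rw [if_neg hcond, abs_zero]
        exact mul_nonneg (mul_nonneg hlam0 hB) (wtFun_nonneg c t)
  have stepJM : ∀ (B : ℝ), 0 ≤ B → ∀ h, BndH c B h → BndH c (lam * B) (opJM M.P v h) := by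
    intro B hB h hh t j
    rcases j with _ | e
    · simp only [opJM, restrP]
      rw [abs_zero]
      exact mul_nonneg (mul_nonneg hlam0 hB) (wtFun_nonneg c t)
    · simp only [opJM, restrP]
      by_cases hcond : 0 < v (some e) ∧ t ≠ ∞
      · rw [if_pos hcond]
        simp only [applyAt, if_neg hcond.2]
        exact jumpcore B hB h hh (fun s' => tauM v s' 0) (fun s' ω => iob_ofReal_le_tauM v s' 0 ω)
          t hcond.2 e (fun ω hω => iob_gamma_le_tauM hcond.1 le_rfl hω)
      · rw [if_neg hcond, abs_zero]
        exact mul_nonneg (mul_nonneg hlam0 hB) (wtFun_nonneg c t)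
  have hmono : ∀ (B B' : ℝ) (h : ℝ≥0∞ → Option E → ℝ), B ≤ B' → BndH c B h → BndH c B' h := by
    intro B B' h hBB' hh t j
    exact (hh t j).trans (mul_le_mul_of_nonneg_right hBB' (wtFun_nonneg c t))
  have hbase : BndH c 1 (expFunP v c) := by
    intro t j
    rcases j with _ | e
    · simp only [expFunP]
      rw [abs_zero, one_mul]
      exact wtFun_nonneg c t
    · simp only [expFunP]
      by_cases hcond : 0 < v (some e) ∧ t ≠ ∞
      · rw [if_pos hcond, one_mul, wtFun, if_neg hcond.2, abs_of_pos (Real.exp_pos _)]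
      · rw [if_neg hcond, abs_zero, one_mul]
        exact wtFun_nonneg c t
  have hiter : ∀ k : ℕ, BndH c ((lam^2)^k) ((opAplus M.P v (ℓm + ℓp))^[k] (expFunP v c)) := by
    intro k
    induction k with
    | zero => simpa using hbase
    | succ k ih =>
      rw [Function.iterate_succ_apply']
      have hnn : (0:ℝ) ≤ (lam^2)^k := by positivity
      have h1 := stepP (ℓm + ℓp) _ hnn _ ih
      have h2 := stepJP _ hnn _ h1
      have h3 := stepM (ℓm + ℓp) _ (by positivity) _ h2
      have h4 := stepJM _ (by positivity) _ h3
      have h5 : BndH c (lam * (lam * (lam^2)^k))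
          (opAplus M.P v (ℓm + ℓp) ((opAplus M.P v (ℓm + ℓp))^[k] (expFunP v c))) := h4
      refine hmono _ _ _ (le_of_eq ?_) h5
      ring
  have hfin := hiter n (ENNReal.ofReal s) (some i)
  have hne : (ENNReal.ofReal s : ℝ≥0∞) ≠ ∞ := ENNReal.ofReal_ne_top
  rw [wtFun, if_neg hne, ENNReal.toReal_ofReal hs, hlam2] at hfin
  exact (le_abs_self _).trans hfin
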